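/- Let f : [0,1] → ℝ be strongly singular, i.e. continuous, of bounded variation, with derivative f′ existing and equal to 0 Lebesgue-almost everywhere on [0,1], and not constant on any nondegenerate subinterval of [0,1]. Then for all a, b ∈ [0,1] with a < b, there exists a point x ∈ [a,b] at which f is not differentiable. -/

import Mathlib

open MeasureTheory Set

/-- property (I) of strongly singular functions. A strongly singular
function on `[0,1]` is nondifferentiable (relative to `[0,1]`) at some point of every
nondegenerate subinterval `[a,b] ⊆ [0,1]`. -/
theorem stronglySingular_not_differentiable_somewhere
    (f : ℝ → ℝ)
    (hc : ContinuousOn f (Icc 0 1)) (hbv : BoundedVariationOn f (Icc 0 1))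
    (hd : ∀ᵐ x ∂(volume.restrict (Icc (0:ℝ) 1)), HasDerivAt f 0 x)
    (hnc : ∀ a b : ℝ, 0 ≤ a → a < b → b ≤ 1 → ∃ x ∈ Icc a b, ∃ y ∈ Icc a b, f x ≠ f y) :
    ∀ a b : ℝ, 0 ≤ a → a < b → b ≤ 1 →
      ∃ x ∈ Icc a b, ¬ DifferentiableWithinAt ℝ f (Icc (0:ℝ) 1) x := by
  intro a b ha hab hb
  by_contra hcon
  push_neg at hcon
  -- key claim: f x = f y for all x ≤ y in [a,b]
  have key : ∀ x ∈ Icc a b, ∀ y ∈ Icc a b, x < y → f x = f y := by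
    intro x hx y hy hlt
    have h01 : Icc x y ⊆ Icc (0:ℝ) 1 :=
      Icc_subset_Icc (ha.trans hx.1) (hy.2.trans hb)
    -- a.e. zero derivative on [x,y]
    have hae : ∀ᵐ z ∂(volume.restrict (Icc x y)), deriv f z = 0 := by
      have h0 : ∀ᵐ z ∂(volume.restrict (Icc (0:ℝ) 1)), deriv f z = 0 :=
        hd.mono fun z hz => hz.deriv
      exact ae_restrict_of_ae_restrict_of_subset h01 h0
    have haeIoc : ∀ᵐ z ∂(volume.restrict (Ioc x y)), deriv f z = 0 :=
      ae_restrict_of_ae_restrict_of_subset Ioc_subset_Icc_self hae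
    have hint : IntervalIntegrable (deriv f) volume x y := by
      rw [intervalIntegrable_iff_integrableOn_Ioc_of_le hlt.le]
      exact (integrableOn_congr_fun_ae haeIoc).mpr ((integrableOn_const_iff).mpr (Or.inl (by simp)))
    have hderiv : ∀ z ∈ Ioo x y, HasDerivAt f (deriv f z) z := by
      intro z hz
      have hzab : z ∈ Icc a b := ⟨hx.1.trans hz.1.le, hz.2.le.trans hy.2⟩
      have hnhds : Icc (0:ℝ) 1 ∈ nhds z :=
        Icc_mem_nhds (lt_of_le_of_lt (ha.trans hx.1) hz.1)
          (lt_of_lt_of_le hz.2 (hy.2.trans hb))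
      exact ((hcon z hzab).differentiableAt hnhds).hasDerivAt
    have hcont : ContinuousOn f (Icc x y) := hc.mono h01
    have hftc := intervalIntegral.integral_eq_sub_of_hasDerivAt_of_le hlt.le
      hcont hderiv hint
    have hzero : ∫ z in x..y, deriv f z = 0 := by
      rw [intervalIntegral.integral_of_le hlt.le]
      rw [integral_congr_ae haeIoc]
      simp
    have : f y - f x = 0 := by rw [← hftc, hzero]
    linarith
  obtain ⟨x, hx, y, hy, hxy⟩ := hnc a b ha hab hb
  rcases lt_trichotomy x y with h | h | h
  · exact hxy (key x hx y hy h)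
  · exact hxy (by rw [h])
  · exact hxy (key y hy x hx h).symm
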